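/- Let x, y, δ, Δ > 0 be real numbers. In a zero-fee CPMM with initial reserves (x, y): the attacker first swaps δ units of X, receiving y₁ = y·δ/(x + δ) units of Y, leaving reserves (x + δ, x·y/(x + δ)); the victim then swaps Δ units of X, leaving reserves (x + δ + Δ, x·y/(x + δ + Δ)); finally the attacker swaps its y₁ units of Y back, receiving δ' = (x + δ + Δ)·y₁ / (x·y/(x + δ + Δ) + y₁) units of X. Then δ' = δ·(x + δ + Δ)² / ((x + δ)² + Δ·δ) and δ' > δ, i.e., the sandwich attack yields a strictly positive profit δ' - δ. -/
import Mathlib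


/-- Sandwich attack profitability in a zero-fee CPMM: front-running the victim trade `Δ` with
`δ` units of X and back-running with the received `y₁ = y·δ/(x+δ)` units of Y returns
`δ' = δ(x+δ+Δ)²/((x+δ)² + Δδ)` units of X, which is strictly more than `δ`. -/
theorem stmt_12 (x y δ Δ y₁ δ' : ℝ)
    (hx : 0 < x) (hy : 0 < y) (hδ : 0 < δ) (hΔ : 0 < Δ)
    (hy₁ : y₁ = y * δ / (x + δ))
    (hδ' : δ' = (x + δ + Δ) * y₁ / (x * y / (x + δ + Δ) + y₁)) :
    δ' = δ * (x + δ + Δ) ^ 2 / ((x + δ) ^ 2 + Δ * δ) ∧ δ < δ' := by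
  have hxδ : 0 < x + δ := by linarith
  have hs : 0 < x + δ + Δ := by linarith
  have hden : 0 < (x + δ) ^ 2 + Δ * δ := by positivity
  have hinner : 0 < x * y / (x + δ + Δ) + y₁ := by
    rw [hy₁]; positivity
  have heq : δ' = δ * (x + δ + Δ) ^ 2 / ((x + δ) ^ 2 + Δ * δ) := by
    rw [hδ', hy₁]
    rw [div_eq_div_iff (by positivity) hden.ne']
    field_simp
    ring
  refine ⟨heq, ?_⟩
  rw [heq, lt_div_iff₀ hden]
  nlinarith [sq_nonneg Δ, mul_pos hΔ hδ, mul_pos hΔ hxδ]
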